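/- Let π : (X,T) → (Y,S) be an almost one-to-one distal factor map, where (X,T) is distal, between topological dynamical systems, and set Z₀ = {z ∈ X : π⁻¹(π(z)) = {z}}. Then for every z ∈ Z₀: the orbit closure cl O(z,T) is contained in Z₀, π⁻¹(cl O(π(z),S)) = cl O(z,T), and π restricts to an isomorphism from (cl O(z,T), T) onto (cl O(π(z),S), S). -/

import Mathlib

open Set Filter TopologicalSpace

/-- The `n`-th iterate (n ∈ ℤ) of a homeomorphism. -/
def hIter {X : Type*} [TopologicalSpace X] (T : X ≃ₜ X) (n : ℤ) : X → X :=
  fun x => (T.toEquiv ^ n) x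

/-- The full orbit {Tⁿ x : n ∈ ℤ} of a point. -/
def orb {X : Type*} [TopologicalSpace X] (T : X ≃ₜ X) (x : X) : Set X :=
  Set.range fun n : ℤ => hIter T n x

/-- The orbit closure of a point. -/
def orbCl {X : Type*} [TopologicalSpace X] (T : X ≃ₜ X) (x : X) : Set X :=
  closure (orb T x)

/-- A system is minimal if it has no proper nonempty closed invariant subset. -/
def IsMinimalSys {X : Type*} [TopologicalSpace X] (T : X → X) : Prop :=
  ∀ A : Set X, IsClosed A → A.Nonempty → T '' A = A → A = Set.univ

/-- `J` is a joining of the subsystems `(K,T)` and `(L,S)`: a closed `T × S`-invariant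
subset of `K ×ˢ L` projecting onto `K` and onto `L`. -/
def IsJoiningOn {X Y : Type*} [TopologicalSpace X] [TopologicalSpace Y]
    (T : X → X) (S : Y → Y) (K : Set X) (L : Set Y) (J : Set (X × Y)) : Prop :=
  IsClosed J ∧ J ⊆ K ×ˢ L ∧ Prod.map T S '' J = J ∧
    Prod.fst '' J = K ∧ Prod.snd '' J = L

/-- The subsystems `(K,T)` and `(L,S)` are disjoint: their only joining is `K ×ˢ L`. -/
def DisjointOn {X Y : Type*} [TopologicalSpace X] [TopologicalSpace Y]
    (T : X → X) (S : Y → Y) (K : Set X) (L : Set Y) : Prop :=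
  ∀ J : Set (X × Y), IsJoiningOn T S K L J → J = K ×ˢ L

set_option linter.unusedSectionVars false


open Set

section
variable {X : Type*} [TopologicalSpace X] (T : X ≃ₜ X)

lemma hIter_zero : hIter T 0 = id := by funext x; simp [hIter, Equiv.Perm.inv_def]

lemma hIter_add (m n : ℤ) : hIter T (m + n) = hIter T m ∘ hIter T n := by
  funext x; simp [hIter, zpow_add, Equiv.Perm.mul_apply]

lemma hIter_one : hIter T 1 = T := by funext x; simp [hIter, Equiv.Perm.inv_def]

lemma hIter_neg_one : hIter T (-1) = T.symm := by
  funext x; simp [hIter, Equiv.Perm.inv_def]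

lemma hIter_continuous (n : ℤ) : Continuous (hIter T n) := by
  induction n using Int.induction_on with
  | zero => rw [hIter_zero]; exact continuous_id
  | succ n ih =>
      have h : hIter T (n + 1) = hIter T 1 ∘ hIter T n := by
        rw [← hIter_add]; ring_nf
      rw [h, hIter_one]; exact T.continuous.comp ih
  | pred n ih =>
      have h : hIter T (-n - 1) = hIter T (-1) ∘ hIter T (-n) := by
        rw [← hIter_add]; ring_nf
      rw [h, hIter_neg_one]; exact T.symm.continuous.comp ih
end
section Ellis
open Set
variable {X : Type*} [TopologicalSpace X] (T : X ≃ₜ X)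

/-- The Ellis (enveloping) semigroup of `T`. -/
def ellis : Set (X → X) := closure (Set.range fun n : ℤ => hIter T n)

lemma hIter_mem_ellis (n : ℤ) : hIter T n ∈ ellis T :=
  subset_closure ⟨n, rfl⟩

lemma isClosed_ellis : IsClosed (ellis T) := isClosed_closure

lemma ellis_comp_mem {f g : X → X} (hf : f ∈ ellis T) (hg : g ∈ ellis T) :
    f ∘ g ∈ ellis T := by
  have step1 : ∀ (n : ℤ) {h : X → X}, h ∈ ellis T → hIter T n ∘ h ∈ ellis T := by
    intro n h hh
    have hc : Continuous (fun h : X → X => hIter T n ∘ h) :=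
      continuous_pi fun x => (hIter_continuous T n).comp (continuous_apply x)
    have hm : Set.MapsTo (fun h : X → X => hIter T n ∘ h)
        (Set.range fun m : ℤ => hIter T m) (Set.range fun m : ℤ => hIter T m) := by
      rintro _ ⟨m, rfl⟩
      exact ⟨n + m, by simpa using hIter_add T n m⟩
    exact (hm.closure hc) hh
  have hc : Continuous (fun h : X → X => h ∘ g) :=
    continuous_pi fun x => continuous_apply (g x)
  have hm : Set.MapsTo (fun h : X → X => h ∘ g)
      (Set.range fun m : ℤ => hIter T m) (ellis T) := by
    rintro _ ⟨m, rfl⟩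
    exact step1 m hg
  have := (hm.closure hc) hf
  rwa [(isClosed_ellis T).closure_eq] at this

lemma ellis_apply_mem_orbCl {f : X → X} (hf : f ∈ ellis T) (z : X) :
    f z ∈ orbCl T z := by
  have hc : Continuous (fun h : X → X => h z) := continuous_apply z
  have hm : Set.MapsTo (fun h : X → X => h z)
      (Set.range fun m : ℤ => hIter T m) (orb T z) := by
    rintro _ ⟨m, rfl⟩; exact ⟨m, rfl⟩
  exact (hm.closure hc) hf

end Ellis
section EllisCompact
open Set
variable {X : Type*} [MetricSpace X] [CompactSpace X] (T : X ≃ₜ X)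

lemma isCompact_ellis : IsCompact (ellis T) := (isClosed_ellis T).isCompact

/-- Evaluation of the Ellis semigroup at `z` gives the whole orbit closure. -/
lemma orbCl_subset_ellis_apply (z : X) :
    orbCl T z ⊆ (fun f : X → X => f z) '' ellis T := by
  have hc : Continuous (fun f : X → X => f z) := continuous_apply z
  have hcpt : IsCompact ((fun f : X → X => f z) '' ellis T) :=
    (isCompact_ellis T).image hc
  have hsub : orb T z ⊆ (fun f : X → X => f z) '' ellis T := by
    rintro _ ⟨n, rfl⟩
    exact ⟨hIter T n, hIter_mem_ellis T n, rfl⟩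
  exact closure_minimal hsub hcpt.isClosed

/-- Members of the Ellis semigroup cannot decrease the "distal separation". -/
lemma ellis_dist_ge {f : X → X} (hf : f ∈ ellis T) {w w' : X} {ε : ℝ}
    (h : ∀ n : ℤ, ε ≤ dist (hIter T n w) (hIter T n w')) :
    ε ≤ dist (f w) (f w') := by
  have hcl : IsClosed {g : X → X | ε ≤ dist (g w) (g w')} :=
    isClosed_le continuous_const (((continuous_apply w)).dist (continuous_apply w'))
  have : ellis T ⊆ {g : X → X | ε ≤ dist (g w) (g w')} :=
    closure_minimal (by rintro _ ⟨n, rfl⟩; exact h n) hcl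
  exact this hf

/-- In a distal system every idempotent of the Ellis semigroup is the identity. -/
lemma ellis_idempotent_eq_id
    (hXdistal : ∀ x y : X, x ≠ y →
      ∃ ε > (0 : ℝ), ∀ n : ℤ, ε ≤ dist (hIter T n x) (hIter T n y))
    {u : X → X} (hu : u ∈ ellis T) (hidem : u ∘ u = u) (x : X) : u x = x := by
  by_contra hne
  obtain ⟨ε, hε, hd⟩ := hXdistal (u x) x hne
  have huux : u (u x) = u x := congrFun hidem x
  -- an open neighbourhood of u determined by the 2 coordinates x, u x
  have hV : ∃ g ∈ ({f : X → X | dist (f (u x)) (u x) < ε / 2 ∧ dist (f x) (u x) < ε / 2} :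
      Set (X → X)) ∩ (Set.range fun n : ℤ => hIter T n), True := by
    have hopen : IsOpen {f : X → X | dist (f (u x)) (u x) < ε / 2 ∧ dist (f x) (u x) < ε / 2} := by
      apply IsOpen.inter
      · exact isOpen_lt ((continuous_apply (u x)).dist continuous_const) continuous_const
      · exact isOpen_lt ((continuous_apply x).dist continuous_const) continuous_const
    have humem : u ∈ {f : X → X | dist (f (u x)) (u x) < ε / 2 ∧ dist (f x) (u x) < ε / 2} := by
      constructor <;> simp [huux, hε, half_pos hε]
    obtain ⟨g, hg1, hg2⟩ := (mem_closure_iff.mp hu) _ hopen humem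
    exact ⟨g, ⟨hg1, hg2⟩, trivial⟩
  obtain ⟨g, ⟨⟨hg1, hg2⟩, ⟨n, rfl⟩⟩, -⟩ := hV
  have := hd n
  have htri : dist (hIter T n (u x)) (hIter T n x) ≤
      dist (hIter T n (u x)) (u x) + dist (u x) (hIter T n x) := dist_triangle _ _ _
  rw [dist_comm (u x)] at htri
  linarith

end EllisCompact
section Minimal
open Set
variable {X : Type*} [MetricSpace X] [CompactSpace X] (T : X ≃ₜ X)

/-- Key minimality-type lemma: in a distal system, orbit closures are symmetric. -/
lemma mem_orbCl_symm
    (hXdistal : ∀ x y : X, x ≠ y →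
      ∃ ε > (0 : ℝ), ∀ n : ℤ, ε ≤ dist (hIter T n x) (hIter T n y))
    {z w : X} (hw : w ∈ orbCl T z) : z ∈ orbCl T w := by
  obtain ⟨p, hp, hpz⟩ := orbCl_subset_ellis_apply T z hw
  -- the compact subsemigroup E ∘ p
  set Ep : Set (X → X) := (fun f : X → X => f ∘ p) '' ellis T with hEp
  have hEpsub : Ep ⊆ ellis T := by
    rintro _ ⟨f, hf, rfl⟩; exact ellis_comp_mem T hf hp
  have hcomp : IsCompact Ep :=
    (isCompact_ellis T).image (continuous_pi fun x => continuous_apply (p x))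
  have hne : Ep.Nonempty := ⟨p, id, by rw [← hIter_zero T]; exact hIter_mem_ellis T 0, by
    funext x; simp [hIter_zero]⟩
  letI : Mul (X → X) := ⟨fun f g => f ∘ g⟩
  letI : Semigroup (X → X) := { mul_assoc := fun f g h => rfl }
  have hmul_left : ∀ r : X → X, Continuous (· * r) :=
    fun r => continuous_pi fun x => continuous_apply (r x)
  have hclosed : ∀ x ∈ Ep, ∀ y ∈ Ep, x * y ∈ Ep := by
    rintro _ ⟨f, hf, rfl⟩ _ ⟨g, hg, rfl⟩
    exact ⟨f ∘ (p ∘ g), ellis_comp_mem T hf (ellis_comp_mem T hp hg), rfl⟩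
  obtain ⟨u, huEp, hidem⟩ := exists_idempotent_in_compact_subsemigroup
    hmul_left Ep hne hcomp hclosed
  have hid : ∀ x, u x = x :=
    ellis_idempotent_eq_id T hXdistal (hEpsub huEp) hidem
  obtain ⟨q, hq, hqp⟩ := huEp
  have : q w = z := by
    have := congrFun hqp z
    simp only [Function.comp_apply] at this
    have hpz' : p z = w := hpz
    rw [hpz'] at this
    rw [this, hid z]
  rw [← this]
  exact ellis_apply_mem_orbCl T hq w

end Minimal
section Semiconj
open Set
variable {X Y : Type*} [MetricSpace X] [CompactSpace X] [MetricSpace Y] [CompactSpace Y]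
  (T : X ≃ₜ X) (S : Y ≃ₜ Y) (π : X → Y)

lemma hIter_semiconj (hπ : ∀ x, π (T x) = S (π x)) (n : ℤ) (x : X) :
    π (hIter T n x) = hIter S n (π x) := by
  have hsymm : ∀ x, π (T.symm x) = S.symm (π x) := by
    intro x
    have := hπ (T.symm x)
    rw [T.apply_symm_apply] at this
    rw [this, S.symm_apply_apply]
  induction n using Int.induction_on with
  | zero => simp [hIter_zero]
  | succ n ih =>
      have h1 : hIter T ((n : ℤ) + 1) = hIter T 1 ∘ hIter T n := by
        rw [← hIter_add]; ring_nf
      have h2 : hIter S ((n : ℤ) + 1) = hIter S 1 ∘ hIter S n := by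
        rw [← hIter_add]; ring_nf
      rw [h1, h2, hIter_one, hIter_one, Function.comp_apply, Function.comp_apply, hπ, ih]
  | pred n ih =>
      have h1 : hIter T (-(n : ℤ) - 1) = hIter T (-1) ∘ hIter T (-n) := by
        rw [← hIter_add]; ring_nf
      have h2 : hIter S (-(n : ℤ) - 1) = hIter S (-1) ∘ hIter S (-n) := by
        rw [← hIter_add]; ring_nf
      rw [h1, h2, hIter_neg_one, hIter_neg_one, Function.comp_apply, Function.comp_apply,
        hsymm, ih]

/-- If `π w = π w'` then `π (f w) = π (f w')` for all `f` in the Ellis semigroup. -/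
lemma ellis_semiconj_eq (hπc : Continuous π) (hπ : ∀ x, π (T x) = S (π x))
    {f : X → X} (hf : f ∈ ellis T) {w w' : X} (h : π w = π w') :
    π (f w) = π (f w') := by
  have hcl : IsClosed {g : X → X | π (g w) = π (g w')} :=
    isClosed_eq (hπc.comp (continuous_apply w)) (hπc.comp (continuous_apply w'))
  have : ellis T ⊆ {g : X → X | π (g w) = π (g w')} := by
    refine closure_minimal ?_ hcl
    rintro _ ⟨n, rfl⟩
    simp only [Set.mem_setOf_eq]
    rw [hIter_semiconj T S π hπ, hIter_semiconj T S π hπ, h]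
  exact this hf

end Semiconj

/-- Let π : (X,T) → (Y,S) be an almost one-to-one distal factor map with (X,T) distal,
and Z₀ = {z : π⁻¹(π z) = {z}}. Then for every z ∈ Z₀ the orbit closure of z is
contained in Z₀, π⁻¹(cl O(π z, S)) = cl O(z, T), and π restricts to an isomorphism
(here: a bijection, automatically a conjugating homeomorphism) between them. -/
theorem stmt_17 {X Y : Type*} [MetricSpace X] [CompactSpace X]
    [MetricSpace Y] [CompactSpace Y] (T : X ≃ₜ X) (S : Y ≃ₜ Y)
    (π : X → Y) (hπc : Continuous π) (hπs : Function.Surjective π)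
    (hπ : ∀ x, π (T x) = S (π x))
    (hXdistal : ∀ x y : X, x ≠ y →
      ∃ ε > (0 : ℝ), ∀ n : ℤ, ε ≤ dist (hIter T n x) (hIter T n y))
    (hdistalext : ∀ x₁ x₂ : X, π x₁ = π x₂ → x₁ ≠ x₂ →
      ∃ ε > (0 : ℝ), ∀ n : ℤ, ε ≤ dist (hIter T n x₁) (hIter T n x₂))
    (halmost : ∃ X₀ : Set X, IsGδ X₀ ∧ Dense X₀ ∧ X₀ ⊆ {z : X | π ⁻¹' {π z} = {z}}) :
    ∀ z ∈ {z : X | π ⁻¹' {π z} = {z}},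
      orbCl T z ⊆ {w : X | π ⁻¹' {π w} = {w}} ∧
      π ⁻¹' (orbCl S (π z)) = orbCl T z ∧
      Set.BijOn π (orbCl T z) (orbCl S (π z)) := by
  intro z hz
  simp only [Set.mem_setOf_eq] at hz
  -- Part 1: orbit closure of z consists of points with singleton fibers
  have part1 : orbCl T z ⊆ {w : X | π ⁻¹' {π w} = {w}} := by
    intro w hw
    simp only [Set.mem_setOf_eq]
    ext w'
    simp only [Set.mem_preimage, Set.mem_singleton_iff]
    constructor
    · intro hww'
      by_contra hne
      obtain ⟨ε, hε, hd⟩ := hdistalext w' w hww' (Ne.symm (fun h => hne h.symm))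
      -- z is in the orbit closure of w
      have hzw : z ∈ orbCl T w := mem_orbCl_symm T hXdistal hw
      obtain ⟨f, hf, hfw⟩ := orbCl_subset_ellis_apply T w hzw
      have hfw' : f w = z := hfw
      -- π (f w') = π (f w) = π z, so f w' = z = f w
      have heq : π (f w') = π (f w) := ellis_semiconj_eq T S π hπc hπ hf hww'
      have hfw'z : f w' = z := by
        have : f w' ∈ π ⁻¹' {π z} := by
          simp only [Set.mem_preimage, Set.mem_singleton_iff]
          rw [heq, hfw']
        rw [hz] at this
        exact this
      -- but distality separates f w' from f w
      have hsep : ε ≤ dist (f w') (f w) := ellis_dist_ge T hf hd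
      rw [hfw'z, hfw'] at hsep
      simp at hsep
      linarith
    · rintro rfl; rfl
  -- π maps orbCl T z onto orbCl S (π z)
  have hmapsto : ∀ w ∈ orbCl T z, π w ∈ orbCl S (π z) := by
    intro w hw
    have hcl : IsClosed (π ⁻¹' orbCl S (π z)) := isClosed_closure.preimage hπc
    have hsub : orb T z ⊆ π ⁻¹' orbCl S (π z) := by
      rintro _ ⟨n, rfl⟩
      exact subset_closure ⟨n, (hIter_semiconj T S π hπ n z).symm⟩
    exact closure_minimal hsub hcl hw
  have hsurj : orbCl S (π z) ⊆ π '' orbCl T z := by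
    have hcpt : IsCompact (π '' orbCl T z) :=
      (isClosed_closure.isCompact).image hπc
    have hsub : orb S (π z) ⊆ π '' orbCl T z := by
      rintro _ ⟨n, rfl⟩
      exact ⟨hIter T n z, subset_closure ⟨n, rfl⟩, hIter_semiconj T S π hπ n z⟩
    exact closure_minimal hsub hcpt.isClosed
  -- Part 2
  have part2 : π ⁻¹' (orbCl S (π z)) = orbCl T z := by
    ext w
    constructor
    · intro hw
      obtain ⟨u, hu, huw⟩ := hsurj hw
      have hufib := part1 hu
      simp only [Set.mem_setOf_eq] at hufib
      have : w ∈ π ⁻¹' {π u} := by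
        simp [Set.mem_preimage, huw]
      rw [hufib] at this
      rw [← this] at hu
      exact hu
    · intro hw
      exact hmapsto w hw
  refine ⟨part1, part2, ⟨fun w hw => hmapsto w hw, ?_, ?_⟩⟩
  · -- InjOn
    intro u hu v hv huv
    have hufib := part1 hu
    simp only [Set.mem_setOf_eq] at hufib
    have : v ∈ π ⁻¹' {π u} := by simp [Set.mem_preimage, huv]
    rw [hufib] at this
    exact this.symm
  · -- SurjOn
    exact hsurj
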